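/- In the sequential candidate-set sampling scheme, the probability that a candidate with score c is included in the candidate set is monotone nondecreasing in c: if c_i ≥ c_j then P(item i appears in the sampled candidate set of size k) ≥ P(item j appears). -/

import Mathlib

/-- Probability of drawing the ordered sequence `s` of `k` distinct candidates in
the sequential sampling scheme: at each step a remaining candidate is drawn with
probability proportional to its score among the remaining candidates. -/
noncomputable def seqProb {m k : ℕ} (c : Fin m → ℝ) (s : Fin k ↪ Fin m) : ℝ :=
  ∏ j : Fin k,
    c (s j) /
      ∑ t ∈ Finset.univ.filter (fun t : Fin m => ∀ j' : Fin k, j' < j → s j' ≠ t),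
        c t

/-- Inclusion probability of candidate `i`: total probability over ordered
selections of size `k` that contain `i`. -/
noncomputable def inclProb (m k : ℕ) (c : Fin m → ℝ) (i : Fin m) : ℝ :=
  ∑ s ∈ Finset.univ.filter (fun s : Fin k ↪ Fin m => ∃ j : Fin k, s j = i),
    seqProb c s

namespace InclMono

variable {m k : ℕ}

/-- The denominator at step `t`. -/
noncomputable def denom (c : Fin m → ℝ) (s : Fin k ↪ Fin m) (t : Fin k) : ℝ :=
  ∑ x ∈ Finset.univ.filter (fun x : Fin m => ∀ t' : Fin k, t' < t → s t' ≠ x), c x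

lemma seqProb_eq (c : Fin m → ℝ) (s : Fin k ↪ Fin m) :
    seqProb c s = ∏ t : Fin k, c (s t) / denom c s t := rfl

/-- Compose an embedding with the swap of `i` and `j`. -/
def Fsw (i j : Fin m) (s : Fin k ↪ Fin m) : Fin k ↪ Fin m :=
  s.trans (Equiv.swap i j).toEmbedding

@[simp] lemma Fsw_apply (i j : Fin m) (s : Fin k ↪ Fin m) (t : Fin k) :
    Fsw i j s t = Equiv.swap i j (s t) := rfl

lemma Fsw_Fsw (i j : Fin m) (s : Fin k ↪ Fin m) : Fsw i j (Fsw i j s) = s := by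
  ext t; simp

lemma denom_pos (hk : k ≤ m) (c : Fin m → ℝ) (hc : ∀ t, 0 < c t)
    (s : Fin k ↪ Fin m) (t : Fin k) : 0 < denom c s t := by
  apply Finset.sum_pos (fun x _ => hc x)
  obtain ⟨x, hx⟩ : ∃ x : Fin m,
      x ∉ (Finset.univ.filter (fun t' : Fin k => t' < t)).image s := by
    by_contra h
    push_neg at h
    have h1 : (Finset.univ : Finset (Fin m)) ⊆
        (Finset.univ.filter (fun t' : Fin k => t' < t)).image s := fun x _ => h x
    have h2 := Finset.card_le_card h1
    have h3 : ((Finset.univ.filter (fun t' : Fin k => t' < t)).image s).card ≤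
        ((Finset.univ : Finset (Fin k)).erase t).card := by
      refine le_trans Finset.card_image_le (Finset.card_le_card ?_)
      intro t' ht'
      simp only [Finset.mem_filter, Finset.mem_univ, true_and] at ht'
      exact Finset.mem_erase.mpr ⟨ne_of_lt ht', Finset.mem_univ _⟩
    have h4 : ((Finset.univ : Finset (Fin k)).erase t).card = k - 1 := by
      rw [Finset.card_erase_of_mem (Finset.mem_univ t), Finset.card_univ, Fintype.card_fin]
    have h5 : m ≤ ((Finset.univ.filter (fun t' : Fin k => t' < t)).image s).card := by
      simpa using h2
    have hkpos : 0 < k := t.pos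
    omega
  refine ⟨x, Finset.mem_filter.mpr ⟨Finset.mem_univ _, fun t' ht' hne => hx ?_⟩⟩
  exact Finset.mem_image.mpr ⟨t', Finset.mem_filter.mpr ⟨Finset.mem_univ _, ht'⟩, hne⟩

lemma sum_swap_ge (c : Fin m → ℝ) (i j : Fin m) (hij : c j ≤ c i)
    (A : Finset (Fin m)) (hjA : j ∈ A) :
    ∑ x ∈ A, c x ≤ ∑ x ∈ A, c (Equiv.swap i j x) := by
  by_cases hiA : i ∈ A
  · refine le_of_eq (Finset.sum_equiv (Equiv.swap i j) (fun x => ?_) (fun x _ => by simp))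
    rcases eq_or_ne x i with rfl | hxi
    · simp [hiA, hjA]
    rcases eq_or_ne x j with rfl | hxj
    · simp [hiA, hjA]
    · rw [Equiv.swap_apply_of_ne_of_ne hxi hxj]
  · rw [← Finset.sum_erase_add A c hjA,
      ← Finset.sum_erase_add A (fun x => c (Equiv.swap i j x)) hjA]
    apply add_le_add
    · refine le_of_eq (Finset.sum_congr rfl fun x hx => ?_)
      have hxj : x ≠ j := (Finset.mem_erase.mp hx).1
      have hxi : x ≠ i := fun h => hiA (h ▸ (Finset.mem_erase.mp hx).2)
      rw [Equiv.swap_apply_of_ne_of_ne hxi hxj]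
    · simpa [Equiv.swap_apply_right] using hij

lemma denom_Fsw (c : Fin m → ℝ) (i j : Fin m) (s : Fin k ↪ Fin m) (t : Fin k) :
    denom c (Fsw i j s) t =
      ∑ x ∈ Finset.univ.filter (fun x : Fin m => ∀ t' : Fin k, t' < t → s t' ≠ x),
        c (Equiv.swap i j x) := by
  unfold denom
  refine Finset.sum_nbij (Equiv.swap i j) ?_ ?_ ?_ (fun x _ => by simp)
  · intro x hx
    rw [Finset.mem_filter] at hx ⊢
    simp only [Finset.mem_filter, Finset.mem_univ, true_and, Fsw_apply] at hx ⊢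
    intro t' ht' h
    exact hx t' ht' (by rw [h, Equiv.swap_apply_self])
  · exact fun a _ b _ h => (Equiv.swap i j).injective h
  · intro y hy
    rw [Finset.coe_filter] at hy ⊢
    simp only [Finset.coe_filter, Finset.mem_univ, true_and, Set.mem_setOf_eq,
      Set.mem_image, Fsw_apply] at hy ⊢
    exact ⟨Equiv.swap i j y, fun t' ht' h => hy t' ht' ((Equiv.swap i j).injective h),
      by simp⟩

lemma seqProb_Fsw_le (hk : k ≤ m) (c : Fin m → ℝ) (hc : ∀ t, 0 < c t)
    (i j : Fin m) (hij : c j ≤ c i) (s : Fin k ↪ Fin m) (hj : ∀ t, s t ≠ j) :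
    seqProb c (Fsw i j s) ≤ seqProb c s := by
  rw [seqProb_eq, seqProb_eq]
  apply Finset.prod_le_prod
  · intro t _
    exact div_nonneg (hc _).le (denom_pos hk c hc _ t).le
  · intro t _
    have hjA : j ∈ Finset.univ.filter
        (fun x : Fin m => ∀ t' : Fin k, t' < t → s t' ≠ x) :=
      Finset.mem_filter.mpr ⟨Finset.mem_univ _, fun t' _ => hj t'⟩
    have hD : denom c s t ≤ denom c (Fsw i j s) t := by
      rw [denom_Fsw]
      exact sum_swap_ge c i j hij _ hjA
    have hnum : c (Fsw i j s t) ≤ c (s t) := by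
      rw [Fsw_apply]
      rcases eq_or_ne (s t) i with h | hi
      · rw [h, Equiv.swap_apply_left]; exact hij
      · rw [Equiv.swap_apply_of_ne_of_ne hi (hj t)]
    exact div_le_div₀ (hc (s t)).le hnum (denom_pos hk c hc s t) hD

lemma sum_incl_swap (c : Fin m → ℝ) (i j : Fin m) :
    ∑ s ∈ Finset.univ.filter (fun s : Fin k ↪ Fin m => ∃ t : Fin k, s t = j),
      seqProb c s =
    ∑ s ∈ Finset.univ.filter (fun s : Fin k ↪ Fin m => ∃ t : Fin k, s t = i),
      seqProb c (Fsw i j s) := by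
  refine Finset.sum_nbij (Fsw i j) ?_ ?_ ?_ ?_
  · intro s hs
    simp only [Finset.mem_filter, Finset.mem_univ, true_and] at hs ⊢
    obtain ⟨t, ht⟩ := hs
    exact ⟨t, by rw [Fsw_apply, ht, Equiv.swap_apply_right]⟩
  · intro a _ b _ h
    have := congrArg (Fsw i j) h
    rwa [Fsw_Fsw, Fsw_Fsw] at this
  · intro s hs
    simp only [Finset.coe_filter, Finset.mem_univ, true_and, Set.mem_setOf_eq,
      Set.mem_image] at hs ⊢
    obtain ⟨t, ht⟩ := hs
    exact ⟨Fsw i j s, ⟨t, by rw [Fsw_apply, ht, Equiv.swap_apply_left]⟩, Fsw_Fsw i j s⟩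
  · intro s _
    rw [show seqProb c s = seqProb c (Fsw i j (Fsw i j s)) by rw [Fsw_Fsw]]

lemma sum_doubles (c : Fin m → ℝ) (i j : Fin m)
    (T : Finset (Fin k ↪ Fin m))
    (hT : ∀ s, s ∈ T ↔ (∃ t : Fin k, s t = i) ∧ (∃ t : Fin k, s t = j)) :
    ∑ s ∈ T, seqProb c (Fsw i j s) = ∑ s ∈ T, seqProb c s := by
  refine Finset.sum_nbij (Fsw i j) ?_ ?_ ?_ (fun s _ => rfl)
  · intro s hs
    rw [hT] at hs ⊢
    obtain ⟨⟨t1, ht1⟩, ⟨t2, ht2⟩⟩ := hs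
    exact ⟨⟨t2, by rw [Fsw_apply, ht2, Equiv.swap_apply_right]⟩,
      ⟨t1, by rw [Fsw_apply, ht1, Equiv.swap_apply_left]⟩⟩
  · intro a _ b _ h
    have := congrArg (Fsw i j) h
    rwa [Fsw_Fsw, Fsw_Fsw] at this
  · intro s hs
    simp only [Set.mem_image, Finset.mem_coe] at hs ⊢
    rw [hT] at hs
    obtain ⟨⟨t1, ht1⟩, ⟨t2, ht2⟩⟩ := hs
    refine ⟨Fsw i j s, ?_, Fsw_Fsw i j s⟩
    rw [hT]
    exact ⟨⟨t2, by rw [Fsw_apply, ht2, Equiv.swap_apply_right]⟩,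
      ⟨t1, by rw [Fsw_apply, ht1, Equiv.swap_apply_left]⟩⟩

end InclMono

/-- In the sequential candidate-set sampling scheme with positive scores, the
probability of being included in the size-`k` candidate set is monotone
nondecreasing in the candidate score: `c j ≤ c i` implies
`P(j included) ≤ P(i included)`. -/
theorem inclusion_prob_monotone_in_score {m k : ℕ} (hk : k ≤ m)
    (c : Fin m → ℝ) (hc : ∀ t, 0 < c t) (i j : Fin m) (hij : c j ≤ c i) :
    inclProb m k c j ≤ inclProb m k c i := by
  classical
  unfold inclProb
  set Si := Finset.univ.filter (fun s : Fin k ↪ Fin m => ∃ t : Fin k, s t = i) with hSi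
  set Sj := Finset.univ.filter (fun s : Fin k ↪ Fin m => ∃ t : Fin k, s t = j) with hSj
  rw [show (∑ s ∈ Sj, seqProb c s) = ∑ s ∈ Si, seqProb c (InclMono.Fsw i j s) from
    InclMono.sum_incl_swap c i j]
  rw [← Finset.sum_inter_add_sum_sdiff Si Sj (fun s => seqProb c (InclMono.Fsw i j s)),
    ← Finset.sum_inter_add_sum_sdiff Si Sj (seqProb c)]
  apply add_le_add
  · refine le_of_eq (InclMono.sum_doubles c i j (Si ∩ Sj) fun s => ?_)
    simp [hSi, hSj, Finset.mem_inter, Finset.mem_filter]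
  · apply Finset.sum_le_sum
    intro s hs
    rw [Finset.mem_sdiff, hSj, Finset.mem_filter] at hs
    have hj' : ∀ t : Fin k, s t ≠ j := by
      intro t ht
      exact hs.2 (Finset.mem_filter.mpr ⟨Finset.mem_univ _, ⟨t, ht⟩⟩)
    exact InclMono.seqProb_Fsw_le hk c hc i j hij s hj'
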